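/- arXiv:2102.02638 — 3 statements merged into one kernel-verified Lean document; each statement's English description precedes it below -/
import Mathlib

section
/- Let P be a finite nonempty set of partition points, with feature map x : P → ℝ^d such that x_P = 0 for a distinguished element P ∈ P (pure on-device processing), front-end delays d^f : P → ℝ, true coefficients θ* ∈ ℝ^d, an estimate θ̂ ∈ ℝ^d, a symmetric positive definite matrix A ∈ ℝ^{d×d}, a weight L ∈ [0,1), and α ≥ 0. Assume the prediction-error bound |θ̂ᵀ x_p − θ*ᵀ x_p| ≤ α √((1−L) x_pᵀ A⁻¹ x_p) holds for every p ∈ P. Let p* minimize p ↦ d^f_p + θ*ᵀ x_p over P and let p̂ minimize p ↦ d^f_p + θ̂ᵀ x_p − α√((1−L) x_pᵀ A⁻¹ x_p) over P. If p̂ ≠ P, then the one-step regret satisfies (d^f_{p̂} + θ*ᵀ x_{p̂}) − (d^f_{p*} + θ*ᵀ x_{p*}) ≤ 2α √(x_{p̂}ᵀ A⁻¹ x_{p̂}). -/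
open Matrix

/-- Regular-sampling case of the one-step regret bound (Lemma 3): if the
prediction-error bound holds for every partition point, `p*` minimizes the true
delay, `p̂` minimizes the optimistic index, and `p̂` is not pure on-device
processing, then the one-step regret is at most `2α√(x_{p̂}ᵀA⁻¹x_{p̂})`. -/
theorem stmt_3 {d : ℕ} {P : Type*} [Fintype P] [Nonempty P]
    (pP : P) (x : P → Fin d → ℝ) (hxP : x pP = 0)
    (df : P → ℝ) (θstar θhat : Fin d → ℝ)
    (A : Matrix (Fin d) (Fin d) ℝ) (hA : A.PosDef)
    (L : ℝ) (hL : L ∈ Set.Ico (0 : ℝ) 1) (α : ℝ) (hα : 0 ≤ α)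
    (hpred : ∀ p : P, |θhat ⬝ᵥ x p - θstar ⬝ᵥ x p| ≤
      α * Real.sqrt ((1 - L) * (x p ⬝ᵥ A⁻¹.mulVec (x p))))
    (pstar : P) (hpstar : ∀ q : P,
      df pstar + θstar ⬝ᵥ x pstar ≤ df q + θstar ⬝ᵥ x q)
    (phat : P) (hphat : ∀ q : P,
      df phat + θhat ⬝ᵥ x phat - α * Real.sqrt ((1 - L) * (x phat ⬝ᵥ A⁻¹.mulVec (x phat))) ≤
      df q + θhat ⬝ᵥ x q - α * Real.sqrt ((1 - L) * (x q ⬝ᵥ A⁻¹.mulVec (x q))))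
    (hne : phat ≠ pP) :
    (df phat + θstar ⬝ᵥ x phat) - (df pstar + θstar ⬝ᵥ x pstar) ≤
      2 * α * Real.sqrt (x phat ⬝ᵥ A⁻¹.mulVec (x phat)) := by
  set s : P → ℝ := fun p => Real.sqrt ((1 - L) * (x p ⬝ᵥ A⁻¹.mulVec (x p))) with hs
  have h1 : θstar ⬝ᵥ x phat - θhat ⬝ᵥ x phat ≤ α * s phat := by
    have := hpred phat
    have := neg_abs_le (θhat ⬝ᵥ x phat - θstar ⬝ᵥ x phat)
    simp only [hs]; linarith
  have h2 : θhat ⬝ᵥ x pstar - θstar ⬝ᵥ x pstar ≤ α * s pstar := by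
    have h := le_abs_self (θhat ⬝ᵥ x pstar - θstar ⬝ᵥ x pstar)
    exact h.trans (hpred pstar)
  have h3 := hphat pstar
  have h4 : s phat ≤ Real.sqrt (x phat ⬝ᵥ A⁻¹.mulVec (x phat)) := by
    have hq : 0 ≤ x phat ⬝ᵥ A⁻¹.mulVec (x phat) := by
      rcases eq_or_ne (x phat) 0 with h | h
      · simp [h]
      · exact le_of_lt (by simpa using hA.inv.dotProduct_mulVec_pos h)
    calc s phat = Real.sqrt (1 - L) * Real.sqrt (x phat ⬝ᵥ A⁻¹.mulVec (x phat)) := by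
          rw [hs]; exact Real.sqrt_mul (by linarith [hL.2]) _
      _ ≤ 1 * Real.sqrt (x phat ⬝ᵥ A⁻¹.mulVec (x phat)) := by
          apply mul_le_mul_of_nonneg_right _ (Real.sqrt_nonneg _)
          exact Real.sqrt_le_one.mpr (by linarith [hL.1])
      _ = _ := one_mul _
  have h5 : 0 ≤ s pstar := Real.sqrt_nonneg _
  nlinarith [mul_le_mul_of_nonneg_left h4 hα, mul_nonneg hα h5]
end

section
/- Let x₁, …, x_M ∈ ℝ^d satisfy ‖x_m‖₂² ≤ C_x² for all m, let β ≥ max{1, C_x²}, and define A₀ = β I_d and A_m = A_{m−1} + x_m x_mᵀ for m = 1, …, M. Then Σ_{m=1}^M x_mᵀ A_{m−1}⁻¹ x_m ≤ 2 log(det(A_M) / det(A₀)). -/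
set_option maxHeartbeats 1000000

open Matrix

/-- The design matrix after `m` samples: `A_m = βI_d + Σ_{s<m} x_s x_sᵀ`
(so `A_0 = βI_d` and `A_m = A_{m-1} + x_{m-1} x_{m-1}ᵀ`). -/
noncomputable def designMatrix {d : ℕ} (β : ℝ) (x : ℕ → Fin d → ℝ) (m : ℕ) :
    Matrix (Fin d) (Fin d) ℝ :=
  β • (1 : Matrix (Fin d) (Fin d) ℝ) + ∑ s ∈ Finset.range m, vecMulVec (x s) (x s)

lemma posSemidef_vecMulVec_self {d : ℕ} (v : Fin d → ℝ) :
    (vecMulVec v v).PosSemidef := by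
  have h : vecMulVec v v = (replicateRow Unit v)ᴴ * replicateRow Unit v := by
    rw [conjTranspose_replicateRow, star_trivial, ← vecMulVec_eq Unit]
  rw [h]
  exact posSemidef_conjTranspose_mul_self _

lemma posSemidef_sum_vecMulVec {d : ℕ} (x : ℕ → Fin d → ℝ) (m : ℕ) :
    (∑ s ∈ Finset.range m, vecMulVec (x s) (x s)).PosSemidef := by
  induction m with
  | zero => simpa using (Matrix.PosSemidef.zero :
      (0 : Matrix (Fin d) (Fin d) ℝ).PosSemidef)
  | succ n ih =>
      rw [Finset.sum_range_succ]
      exact ih.add (posSemidef_vecMulVec_self (x n))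

lemma designMatrix_posDef {d : ℕ} {β : ℝ} (hβ : 0 < β) (x : ℕ → Fin d → ℝ) (m : ℕ) :
    (designMatrix β x m).PosDef := by
  apply Matrix.PosDef.add_posSemidef
  · rw [smul_one_eq_diagonal]
    exact Matrix.PosDef.diagonal fun _ => hβ
  · exact posSemidef_sum_vecMulVec x m

lemma det_one_add_row_mul_col {d : ℕ} (B : Matrix (Fin d) (Fin d) ℝ) (u v : Fin d → ℝ) :
    (1 + replicateRow Unit v * B * replicateCol Unit u).det = 1 + v ⬝ᵥ B.mulVec u := by
  rw [det_unique]
  simp only [Matrix.add_apply, Matrix.one_apply_eq, Matrix.mul_apply, Matrix.replicateRow_apply,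
    Matrix.replicateCol_apply, Matrix.mulVec, dotProduct]
  congr 1
  simp only [Finset.sum_mul, Finset.mul_sum]
  rw [Finset.sum_comm]
  exact Finset.sum_congr rfl fun i _ => Finset.sum_congr rfl fun j _ => by ring

lemma designMatrix_det_succ {d : ℕ} {β : ℝ} (hβ : 0 < β) (x : ℕ → Fin d → ℝ) (m : ℕ) :
    (designMatrix β x (m + 1)).det =
      (designMatrix β x m).det * (1 + x m ⬝ᵥ (designMatrix β x m)⁻¹.mulVec (x m)) := by
  have hpd := designMatrix_posDef hβ x m
  have h1 : designMatrix β x (m + 1) =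
      designMatrix β x m + replicateCol Unit (x m) * replicateRow Unit (x m) := by
    rw [← vecMulVec_eq Unit]
    simp only [designMatrix, Finset.sum_range_succ, add_assoc]
  rw [h1, det_add_replicateCol_mul_replicateRow hpd.det_pos.ne'.isUnit,
    det_one_add_row_mul_col]

theorem le_two_mul_log_one_add {q : ℝ} (hq0 : 0 ≤ q) (hq1 : q ≤ 1) :
    q ≤ 2 * Real.log (1 + q) := by
  have h1q : (0:ℝ) < 1 + q := by linarith
  have hlog := Real.one_sub_inv_le_log_of_pos h1q
  have hinv : (1 + q) * (1 + q)⁻¹ = 1 := mul_inv_cancel₀ h1q.ne'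
  nlinarith [sq_nonneg q, inv_nonneg.mpr h1q.le]

/-- First inequality of the elliptical potential lemma (Lemma 4): with
`‖x_m‖₂² ≤ C_x²` and `β ≥ max{1, C_x²}`,
`Σ_{m=1}^M x_mᵀ A_{m−1}⁻¹ x_m ≤ 2 log(det A_M / det A_0)`
(0-indexed below: the `m`-th sample uses `A_m = βI + Σ_{s<m} x_s x_sᵀ`). -/
theorem stmt_5 {d M : ℕ} (Cx β : ℝ) (hβ : β ≥ max 1 (Cx ^ 2))
    (x : ℕ → Fin d → ℝ) (hx : ∀ m < M, x m ⬝ᵥ x m ≤ Cx ^ 2) :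
    ∑ m ∈ Finset.range M, x m ⬝ᵥ (designMatrix β x m)⁻¹.mulVec (x m) ≤
      2 * Real.log ((designMatrix β x M).det / (designMatrix β x 0).det) := by
  have hβ1 : (1:ℝ) ≤ β := le_trans (le_max_left _ _) hβ
  have hβC : Cx ^ 2 ≤ β := le_trans (le_max_right _ _) hβ
  have hβ0 : (0:ℝ) < β := lt_of_lt_of_le one_pos hβ1
  have hpd : ∀ m, (designMatrix β x m).PosDef := designMatrix_posDef hβ0 x
  set q : ℕ → ℝ := fun m => x m ⬝ᵥ (designMatrix β x m)⁻¹.mulVec (x m) with hqdef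
  have hq0 : ∀ m, 0 ≤ q m := by
    intro m
    have h := ((hpd m).inv).posSemidef.dotProduct_mulVec_nonneg (x m)
    rw [star_trivial] at h
    exact h
  have hq1 : ∀ m < M, q m ≤ 1 := by
    intro m hm
    set y : Fin d → ℝ := (designMatrix β x m)⁻¹.mulVec (x m) with hy
    have hAy : (designMatrix β x m).mulVec y = x m := by
      rw [hy, mulVec_mulVec, Matrix.mul_nonsing_inv _ (hpd m).det_pos.ne'.isUnit, one_mulVec]
    have hyy : 0 ≤ y ⬝ᵥ y := Finset.sum_nonneg fun i _ => mul_self_nonneg _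
    have hxx0 : 0 ≤ x m ⬝ᵥ x m := Finset.sum_nonneg fun i _ => mul_self_nonneg _
    have hqy : q m = y ⬝ᵥ (designMatrix β x m).mulVec y := by
      calc q m = x m ⬝ᵥ y := rfl
        _ = (designMatrix β x m).mulVec y ⬝ᵥ y := by rw [hAy]
        _ = y ⬝ᵥ (designMatrix β x m).mulVec y := dotProduct_comm _ _
    have h1 : β * (y ⬝ᵥ y) ≤ q m := by
      have hsum : 0 ≤ y ⬝ᵥ (∑ s ∈ Finset.range m, vecMulVec (x s) (x s)).mulVec y := by
        have h := (posSemidef_sum_vecMulVec x m).dotProduct_mulVec_nonneg y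
        rw [star_trivial] at h
        exact h
      have hexp : y ⬝ᵥ (designMatrix β x m).mulVec y =
          β * (y ⬝ᵥ y) + y ⬝ᵥ (∑ s ∈ Finset.range m, vecMulVec (x s) (x s)).mulVec y := by
        rw [designMatrix, add_mulVec, dotProduct_add, smul_mulVec, one_mulVec,
          dotProduct_smul, smul_eq_mul]
      rw [hqy, hexp]
      linarith
    have h2 : q m ^ 2 ≤ (x m ⬝ᵥ x m) * (y ⬝ᵥ y) := by
      have hcs := Finset.sum_mul_sq_le_sq_mul_sq Finset.univ (x m) y
      have hxq : q m = ∑ i, x m i * y i := rfl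
      have hx2 : x m ⬝ᵥ x m = ∑ i, x m i ^ 2 := by simp [dotProduct, sq]
      have hy2 : y ⬝ᵥ y = ∑ i, y i ^ 2 := by simp [dotProduct, sq]
      rw [hxq, hx2, hy2]
      exact hcs
    nlinarith [hx m hm, hq0 m, hyy, hxx0]
  have hdetpos : ∀ m, 0 < (designMatrix β x m).det := fun m => (hpd m).det_pos
  have step : ∀ m, Real.log (designMatrix β x (m+1)).det - Real.log (designMatrix β x m).det
      = Real.log (1 + q m) := by
    intro m
    rw [designMatrix_det_succ hβ0 x m,
      Real.log_mul (hdetpos m).ne' (by have := hq0 m; positivity : (0:ℝ) < 1 + q m).ne']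
    ring
  calc ∑ m ∈ Finset.range M, q m
      ≤ ∑ m ∈ Finset.range M, 2 * Real.log (1 + q m) := by
        apply Finset.sum_le_sum
        intro m hm
        exact le_two_mul_log_one_add (hq0 m) (hq1 m (Finset.mem_range.mp hm))
    _ = 2 * ∑ m ∈ Finset.range M,
          (Real.log (designMatrix β x (m+1)).det - Real.log (designMatrix β x m).det) := by
        rw [Finset.mul_sum]
        exact Finset.sum_congr rfl fun m _ => by rw [step m]
    _ = 2 * (Real.log (designMatrix β x M).det - Real.log (designMatrix β x 0).det) := by
        rw [Finset.sum_range_sub (fun m => Real.log (designMatrix β x m).det)]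
    _ = 2 * Real.log ((designMatrix β x M).det / (designMatrix β x 0).det) := by
        rw [Real.log_div (hdetpos M).ne' (hdetpos 0).ne']
end

section
/- Let x₁, …, x_M ∈ ℝ^d satisfy ‖x_m‖₂² ≤ C_x² for all m, let β ≥ max{1, C_x²}, define A₀ = β I_d and A_m = A_{m−1} + x_m x_mᵀ, let α ≥ 0, let T ≥ M, and let r₁, …, r_M be nonnegative reals with r_m ≤ 2α √(x_mᵀ A_{m−1}⁻¹ x_m) for every m. Then Σ_{m=1}^M r_m ≤ 2α √(2 T d (log(β + T C_x²/d) − log β)). -/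
open Matrix

namespace Stmt8Aux

lemma psd_vecMulVec {d : ℕ} (v : Fin d → ℝ) : (vecMulVec v v).PosSemidef := by
  refine Matrix.PosSemidef.of_dotProduct_mulVec_nonneg ?_ ?_
  · ext i j
    simp [vecMulVec_apply, conjTranspose_apply, mul_comm]
  · intro y
    have h : vecMulVec v v *ᵥ y = (v ⬝ᵥ y) • v := by
      ext i
      simp only [vecMulVec_apply, mulVec, dotProduct, Finset.mul_sum, Pi.smul_apply,
        smul_eq_mul]
      rw [Finset.sum_mul]
      exact Finset.sum_congr rfl fun j _ => by ring
    rw [h]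
    have h2 : star y ⬝ᵥ (v ⬝ᵥ y) • v = (v ⬝ᵥ y) * (v ⬝ᵥ y) := by
      rw [star_trivial, dotProduct_smul, smul_eq_mul, dotProduct_comm y v]
    rw [h2]
    exact mul_self_nonneg _

lemma psd_sum {d : ℕ} (x : ℕ → Fin d → ℝ) (m : ℕ) :
    (∑ s ∈ Finset.range m, vecMulVec (x s) (x s)).PosSemidef := by
  induction m with
  | zero => simpa using Matrix.PosSemidef.zero
  | succ n ih =>
    rw [Finset.sum_range_succ]
    exact ih.add (psd_vecMulVec (x n))

lemma design_posDef {d : ℕ} {β : ℝ} (hβ : 0 < β) (x : ℕ → Fin d → ℝ) (m : ℕ) :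
    (designMatrix β x m).PosDef := by
  have h1 : (β • (1 : Matrix (Fin d) (Fin d) ℝ)).PosDef := by
    rw [Matrix.smul_one_eq_diagonal]
    exact Matrix.posDef_diagonal_iff.mpr fun _ => hβ
  exact h1.add_posSemidef (psd_sum x m)

lemma quad_lower {d : ℕ} {β : ℝ} (x : ℕ → Fin d → ℝ) (m : ℕ) (y : Fin d → ℝ) :
    β * (y ⬝ᵥ y) ≤ y ⬝ᵥ (designMatrix β x m *ᵥ y) := by
  have h := (psd_sum x m).dotProduct_mulVec_nonneg y
  rw [star_trivial] at h
  rw [designMatrix, Matrix.add_mulVec, dotProduct_add, Matrix.smul_mulVec,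
    Matrix.one_mulVec, dotProduct_smul]
  rw [smul_eq_mul]
  linarith [h]

lemma q_nonneg {d : ℕ} {β : ℝ} (hβ : 0 < β) (x : ℕ → Fin d → ℝ) (m : ℕ) :
    0 ≤ x m ⬝ᵥ (designMatrix β x m)⁻¹ *ᵥ x m := by
  have h := ((design_posDef hβ x m).inv).posSemidef.dotProduct_mulVec_nonneg (x m)
  rwa [star_trivial] at h

lemma q_le_one {d : ℕ} {β Cx : ℝ} (hβ1 : 1 ≤ β) (hCx : Cx ^ 2 ≤ β)
    (x : ℕ → Fin d → ℝ) (m : ℕ) (hxm : x m ⬝ᵥ x m ≤ Cx ^ 2) :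
    x m ⬝ᵥ (designMatrix β x m)⁻¹ *ᵥ x m ≤ 1 := by
  have hβ : (0:ℝ) < β := lt_of_lt_of_le one_pos hβ1
  set A := designMatrix β x m with hA
  have hApd := design_posDef hβ x m
  set y := A⁻¹ *ᵥ x m with hy
  have hAy : A *ᵥ y = x m := by
    rw [hy, Matrix.mulVec_mulVec,
      Matrix.mul_nonsing_inv _ (isUnit_iff_ne_zero.mpr hApd.det_pos.ne'), Matrix.one_mulVec]
  have hq0 : 0 ≤ x m ⬝ᵥ y := q_nonneg hβ x m
  have h1 : β * (y ⬝ᵥ y) ≤ x m ⬝ᵥ y := by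
    have h2 := quad_lower (β := β) x m y
    rwa [hAy, dotProduct_comm y (x m)] at h2
  have hyy : (0:ℝ) ≤ y ⬝ᵥ y := by
    simpa [dotProduct] using (Finset.sum_nonneg fun i _ => mul_self_nonneg (y i) :
      (0:ℝ) ≤ ∑ i, y i * y i)
  have hCS : (x m ⬝ᵥ y) ^ 2 ≤ (x m ⬝ᵥ x m) * (y ⬝ᵥ y) := by
    have h3 := Finset.sum_mul_sq_le_sq_mul_sq Finset.univ (x m) y
    simpa [dotProduct, sq] using h3
  have hxx : (0:ℝ) ≤ x m ⬝ᵥ x m := by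
    simpa [dotProduct] using (Finset.sum_nonneg fun i _ => mul_self_nonneg (x m i) :
      (0:ℝ) ≤ ∑ i, x m i * x m i)
  nlinarith [hCS, h1, hq0, hyy, hxm, hCx, sq_nonneg (x m ⬝ᵥ y - 1),
    mul_le_mul_of_nonneg_right (hxm.trans hCx) hyy]

lemma det_succ {d : ℕ} {β : ℝ} (hβ : 0 < β) (x : ℕ → Fin d → ℝ) (m : ℕ) :
    (designMatrix β x (m+1)).det =
      (designMatrix β x m).det * (1 + x m ⬝ᵥ (designMatrix β x m)⁻¹ *ᵥ x m) := by
  have hApd := design_posDef hβ x m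
  have hdet : IsUnit (designMatrix β x m).det := isUnit_iff_ne_zero.mpr hApd.det_pos.ne'
  have hstep : designMatrix β x (m+1) = designMatrix β x m + vecMulVec (x m) (x m) := by
    simp [designMatrix, Finset.sum_range_succ, add_assoc]
  rw [hstep, vecMulVec_eq Unit, Matrix.det_add_replicateCol_mul_replicateRow hdet]
  congr 1
  rw [Matrix.mul_assoc, ← Matrix.replicateCol_mulVec, Matrix.det_unique, Matrix.add_apply,
    Matrix.one_apply_eq, Matrix.replicateRow_mul_replicateCol_apply]

lemma le_two_log {u : ℝ} (h0 : 0 ≤ u) (h1 : u ≤ 1) : u ≤ 2 * Real.log (1 + u) := by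
  have hu : (0:ℝ) < 1 + u := by linarith
  have h2 := Real.log_le_sub_one_of_pos (show (0:ℝ) < (1 + u)⁻¹ by positivity)
  rw [Real.log_inv] at h2
  have h3 : (1 + u)⁻¹ - 1 = -(u / (1 + u)) := by field_simp; ring
  rw [h3] at h2
  have h5 : u / 2 ≤ u / (1 + u) := div_le_div_of_nonneg_left h0 hu (by linarith)
  linarith

lemma trace_vecMulVec' {d : ℕ} (v : Fin d → ℝ) : (vecMulVec v v).trace = v ⬝ᵥ v := by
  simp [Matrix.trace, Matrix.diag, vecMulVec_apply, dotProduct]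

lemma trace_design {d : ℕ} (β : ℝ) (x : ℕ → Fin d → ℝ) (M : ℕ) :
    (designMatrix β x M).trace = β * d + ∑ m ∈ Finset.range M, x m ⬝ᵥ x m := by
  simp [designMatrix, Matrix.trace_add, Matrix.trace_sum, Matrix.trace_smul, Matrix.trace_one,
    trace_vecMulVec', smul_eq_mul]

lemma trace_eq_sum_eigenvalues {n : Type*} [Fintype n] [DecidableEq n] {A : Matrix n n ℝ}
    (hA : A.IsHermitian) : A.trace = ∑ i, hA.eigenvalues i := by
  simpa using hA.trace_eq_sum_eigenvalues

lemma telescope {d : ℕ} {β : ℝ} (hβ : 0 < β) (x : ℕ → Fin d → ℝ) (M : ℕ) :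
    ∑ m ∈ Finset.range M, Real.log (1 + x m ⬝ᵥ (designMatrix β x m)⁻¹ *ᵥ x m) =
      Real.log (designMatrix β x M).det - Real.log (designMatrix β x 0).det := by
  induction M with
  | zero => simp
  | succ n ih =>
    have hq := q_nonneg hβ x n
    rw [Finset.sum_range_succ, ih, det_succ hβ x n,
      Real.log_mul (design_posDef hβ x n).det_pos.ne' (by linarith)]
    ring

lemma det_design_zero {d : ℕ} (β : ℝ) (x : ℕ → Fin d → ℝ) :
    (designMatrix β x 0).det = β ^ d := by
  simp [designMatrix, Matrix.smul_one_eq_diagonal, Matrix.det_diagonal]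

lemma logdet_le_trace {n : Type*} [Fintype n] [DecidableEq n] [Nonempty n] {A : Matrix n n ℝ}
    (hA : A.PosDef) :
    Real.log A.det ≤ (Fintype.card n) * Real.log (A.trace / (Fintype.card n)) := by
  set k : ℕ := Fintype.card n with hkdef
  have hk : (0:ℝ) < k := by
    have := Fintype.card_pos (α := n)
    exact_mod_cast this
  set ev : n → ℝ := hA.isHermitian.eigenvalues with hev
  have hevpos : ∀ i, 0 < ev i := hA.eigenvalues_pos
  have hdet : A.det = ∏ i, ev i := by
    simpa using hA.isHermitian.det_eq_prod_eigenvalues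
  have htr : A.trace = ∑ i, ev i := trace_eq_sum_eigenvalues hA.isHermitian
  have hgm : ∏ i, ev i ^ ((k:ℝ)⁻¹) ≤ ∑ i, (k:ℝ)⁻¹ * ev i :=
    Real.geom_mean_le_arith_mean_weighted Finset.univ _ _ (fun _ _ => by positivity)
      (by simp [Finset.sum_const, Finset.card_univ, ← hkdef, nsmul_eq_mul,
        mul_inv_cancel₀ hk.ne']) (fun i _ => (hevpos i).le)
  have hprod : ∏ i, ev i ^ ((k:ℝ)⁻¹) = (∏ i, ev i) ^ ((k:ℝ)⁻¹) :=
    Real.finset_prod_rpow Finset.univ ev (fun i _ => (hevpos i).le) _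
  have hrhs : ∑ i, (k:ℝ)⁻¹ * ev i = A.trace / k := by
    rw [htr, ← Finset.mul_sum]
    ring
  have hkey : A.det ^ ((k:ℝ)⁻¹) ≤ A.trace / k := by
    rw [hdet, ← hprod, ← hrhs]
    exact hgm
  have hdp := hA.det_pos
  have hlog : Real.log A.det = k * Real.log (A.det ^ ((k:ℝ)⁻¹)) := by
    rw [Real.log_rpow hdp]
    field_simp
  rw [hlog]
  have h1 : Real.log (A.det ^ ((k:ℝ)⁻¹)) ≤ Real.log (A.trace / k) :=
    Real.log_le_log (Real.rpow_pos_of_pos hdp _) hkey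
  exact mul_le_mul_of_nonneg_left h1 hk.le

end Stmt8Aux

/-- Cumulative regret over the regular sampling sequence: if each one-step
regret satisfies `r_m ≤ 2α√(x_mᵀ A_{m−1}⁻¹ x_m)`, then
`Σ_{m=1}^M r_m ≤ 2α √(2Td(log(β + T C_x²/d) − log β))`
(0-indexed below: the `m`-th sample uses `A_m = βI + Σ_{s<m} x_s x_sᵀ`). -/
theorem stmt_8 {d M T : ℕ} (Cx β α : ℝ) (hβ : β ≥ max 1 (Cx ^ 2)) (hα : 0 ≤ α)
    (hMT : M ≤ T)
    (x : ℕ → Fin d → ℝ) (hx : ∀ m < M, x m ⬝ᵥ x m ≤ Cx ^ 2)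
    (r : ℕ → ℝ) (hr0 : ∀ m < M, 0 ≤ r m)
    (hr : ∀ m < M, r m ≤ 2 * α * Real.sqrt (x m ⬝ᵥ (designMatrix β x m)⁻¹.mulVec (x m))) :
    ∑ m ∈ Finset.range M, r m ≤
      2 * α * Real.sqrt (2 * T * d * (Real.log (β + T * Cx ^ 2 / d) - Real.log β)) := by
  open Stmt8Aux in
  have hβ1 : (1:ℝ) ≤ β := le_trans (le_max_left _ _) hβ
  have hCxβ : Cx ^ 2 ≤ β := le_trans (le_max_right _ _) hβ
  have hβ0 : (0:ℝ) < β := lt_of_lt_of_le one_pos hβ1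
  have hCx2 : (0:ℝ) ≤ Cx ^ 2 := sq_nonneg _
  rcases Nat.eq_zero_or_pos d with hd | hd
  · -- degenerate case `d = 0`
    subst hd
    have hsum : ∑ m ∈ Finset.range M, r m ≤ 0 := by
      apply Finset.sum_nonpos
      intro m hm
      have h1 := hr m (Finset.mem_range.mp hm)
      have h2 : x m ⬝ᵥ (designMatrix β x m)⁻¹ *ᵥ x m = 0 := by
        simp [dotProduct]
      rw [h2, Real.sqrt_zero, mul_zero] at h1
      exact h1
    have : (0:ℝ) ≤ 2 * α * Real.sqrt (2 * T * 0 * (Real.log (β + T * Cx ^ 2 / 0) - Real.log β)) := by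
      positivity
    push_cast at this ⊢
    linarith
  -- main case `0 < d`
  set q : ℕ → ℝ := fun m => x m ⬝ᵥ (designMatrix β x m)⁻¹ *ᵥ x m with hqdef
  have hq0 : ∀ m, 0 ≤ q m := fun m => q_nonneg hβ0 x m
  have hq1 : ∀ m < M, q m ≤ 1 := fun m hm => q_le_one hβ1 hCxβ x m (hx m hm)
  have hD : (0:ℝ) < d := by exact_mod_cast hd
  set L : ℝ := Real.log (β + T * Cx ^ 2 / d) with hL
  -- Step D: log det A_M ≤ d * L
  have hNE : Nonempty (Fin d) := Fin.pos_iff_nonempty.mp hd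
  have hPD := design_posDef hβ0 x M
  have hldt := logdet_le_trace hPD
  rw [Fintype.card_fin] at hldt
  have htr_le : (designMatrix β x M).trace ≤ β * d + T * Cx ^ 2 := by
    rw [trace_design]
    have h1 : ∑ m ∈ Finset.range M, x m ⬝ᵥ x m ≤ M * Cx ^ 2 := by
      calc ∑ m ∈ Finset.range M, x m ⬝ᵥ x m ≤ ∑ m ∈ Finset.range M, Cx ^ 2 :=
            Finset.sum_le_sum fun m hm => hx m (Finset.mem_range.mp hm)
        _ = M * Cx ^ 2 := by simp [mul_comm]
    have h2 : (M:ℝ) * Cx ^ 2 ≤ T * Cx ^ 2 := by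
      apply mul_le_mul_of_nonneg_right _ hCx2
      exact_mod_cast hMT
    linarith
  have htr_pos : (0:ℝ) < (designMatrix β x M).trace := by
    rw [trace_design]
    have : (0:ℝ) ≤ ∑ m ∈ Finset.range M, x m ⬝ᵥ x m := by
      apply Finset.sum_nonneg
      intro m _
      exact Finset.sum_nonneg fun i _ => mul_self_nonneg (x m i)
    nlinarith
  have hlogdet : Real.log (designMatrix β x M).det ≤ d * L := by
    refine hldt.trans ?_
    apply mul_le_mul_of_nonneg_left _ hD.le
    apply Real.log_le_log (by positivity)
    rw [div_le_iff₀ hD, add_mul, div_mul_cancel₀ _ hD.ne']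
    linarith
  -- Step C: ∑ q ≤ 2 * (d * L - d * log β)
  have hsumq : ∑ m ∈ Finset.range M, q m ≤ 2 * (d * L - d * Real.log β) := by
    have h1 : ∑ m ∈ Finset.range M, q m ≤
        ∑ m ∈ Finset.range M, 2 * Real.log (1 + q m) :=
      Finset.sum_le_sum fun m hm => le_two_log (hq0 m) (hq1 m (Finset.mem_range.mp hm))
    have h2 : ∑ m ∈ Finset.range M, 2 * Real.log (1 + q m) =
        2 * (Real.log (designMatrix β x M).det - Real.log (designMatrix β x 0).det) := by
      rw [← Finset.mul_sum, telescope hβ0 x M]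
    have h3 : Real.log (designMatrix β x 0).det = d * Real.log β := by
      rw [det_design_zero, Real.log_pow]
    rw [h2, h3] at h1
    nlinarith [hlogdet]
  have hsumq0 : (0:ℝ) ≤ ∑ m ∈ Finset.range M, q m :=
    Finset.sum_nonneg fun m _ => hq0 m
  have hΔ0 : (0:ℝ) ≤ 2 * (d * L - d * Real.log β) := le_trans hsumq0 hsumq
  -- Step B: Cauchy-Schwarz
  have hCS : (∑ m ∈ Finset.range M, Real.sqrt (q m)) ^ 2 ≤
      M * ∑ m ∈ Finset.range M, q m := by
    have h := Finset.sum_mul_sq_le_sq_mul_sq (Finset.range M) (fun _ => (1:ℝ))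
      (fun m => Real.sqrt (q m))
    simpa [Real.sq_sqrt (hq0 _)] using h
  have hS0 : (0:ℝ) ≤ ∑ m ∈ Finset.range M, Real.sqrt (q m) :=
    Finset.sum_nonneg fun m _ => Real.sqrt_nonneg _
  have hSle : ∑ m ∈ Finset.range M, Real.sqrt (q m) ≤
      Real.sqrt (2 * T * d * (L - Real.log β)) := by
    rw [← Real.sqrt_sq hS0]
    apply Real.sqrt_le_sqrt
    calc (∑ m ∈ Finset.range M, Real.sqrt (q m)) ^ 2 ≤ M * ∑ m ∈ Finset.range M, q m := hCS
      _ ≤ T * (2 * (d * L - d * Real.log β)) := by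
          apply mul_le_mul (by exact_mod_cast hMT) hsumq hsumq0
          positivity
      _ = 2 * T * d * (L - Real.log β) := by ring
  calc ∑ m ∈ Finset.range M, r m
      ≤ ∑ m ∈ Finset.range M, 2 * α * Real.sqrt (q m) :=
        Finset.sum_le_sum fun m hm => hr m (Finset.mem_range.mp hm)
    _ = 2 * α * ∑ m ∈ Finset.range M, Real.sqrt (q m) := by rw [Finset.mul_sum]
    _ ≤ 2 * α * Real.sqrt (2 * T * d * (L - Real.log β)) := by
        apply mul_le_mul_of_nonneg_left hSle (by positivity)
end
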